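/- arXiv:2004.07452 — 2 statements merged into one kernel-verified Lean document; each statement's English description precedes it below -/
import Mathlib

section
/- For a finite graph G on n vertices with Laplacian matrix L(G), the number of rooted spanning forests of G equals det(Iₙ + L(G)). -/
open SimpleGraph

/-- A rooted spanning forest of `G`: a spanning acyclic subgraph together with a set of
roots containing exactly one vertex of each connected component. -/
def RootedSpanningForest {V : Type*} (G : SimpleGraph V) : Type _ :=
  {p : SimpleGraph V × Set V // p.1 ≤ G ∧ p.1.IsAcyclic ∧
    ∀ c : p.1.ConnectedComponent, ∃! v, v ∈ p.2 ∧ p.1.connectedComponentMk v = c}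

/-- The number of rooted spanning forests of `G`. -/
noncomputable def numRootedSpanningForests {V : Type*} (G : SimpleGraph V) : ℕ :=
  Nat.card (RootedSpanningForest G)

open scoped Classical in
/-- The Laplacian matrix of `G` with integer entries. -/
noncomputable def lap {V : Type*} [Fintype V] [DecidableEq V] (G : SimpleGraph V) : Matrix V V ℤ :=
  G.lapMatrix ℤ

set_option linter.unusedSectionVars false

open SimpleGraph Finset Matrix
open scoped Classical

namespace RSF

variable {V : Type*} [Fintype V] [DecidableEq V]

/-- One step of the parent function on `Option V`. -/
def fstep (f : V → Option V) : Option V → Option V := fun o => o.bind f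

/-- `f` is acyclic: iterating the parent function from any vertex reaches `none`. -/
def Acy (f : V → Option V) : Prop := ∀ j : V, ∃ k, (fstep f)^[k] (some j) = none

theorem fstep_iter_succ (f : V → Option V) (k : ℕ) (j : V) :
    (fstep f)^[k + 1] (some j) = (fstep f)^[k] (f j) := by
  rw [Function.iterate_succ_apply]; rfl

theorem fstep_iter_none (f : V → Option V) (k : ℕ) : (fstep f)^[k] none = none := by
  induction k with
  | zero => rfl
  | succ n ih => rw [Function.iterate_succ_apply]; exact ih

/-- The height of a vertex: number of steps to reach `none`. -/
noncomputable def ht (f : V → Option V) (j : V) : ℕ :=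
  if h : ∃ k, (fstep f)^[k] (some j) = none then Nat.find h else 0

theorem ht_pos (f : V → Option V) (hacy : Acy f) (j : V) : 0 < ht f j := by
  rw [ht, dif_pos (hacy j)]
  rcases Nat.eq_zero_or_pos (Nat.find (hacy j)) with h | h
  · exact absurd (h ▸ Nat.find_spec (hacy j)) (by simp)
  · exact h

theorem ht_spec (f : V → Option V) (hacy : Acy f) (j : V) :
    (fstep f)^[ht f j] (some j) = none := by
  rw [ht, dif_pos (hacy j)]; exact Nat.find_spec (hacy j)

theorem ht_min (f : V → Option V) (hacy : Acy f) (j : V) {k : ℕ}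
    (hk : (fstep f)^[k] (some j) = none) : ht f j ≤ k := by
  rw [ht, dif_pos (hacy j)]; exact Nat.find_le hk

theorem ht_some (f : V → Option V) (hacy : Acy f) {j i : V} (h : f j = some i) :
    ht f j = ht f i + 1 := by
  refine le_antisymm ?_ ?_
  · exact ht_min f hacy j (by rw [fstep_iter_succ, h]; exact ht_spec f hacy i)
  · have h1 : 1 ≤ ht f j := ht_pos f hacy j
    obtain ⟨m, hm⟩ := Nat.exists_eq_add_of_le h1
    have : (fstep f)^[m] (some i) = none := by
      have := ht_spec f hacy j
      rwa [hm, add_comm, fstep_iter_succ, h] at this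
    have := ht_min f hacy i this
    omega

theorem ht_none (f : V → Option V) (hacy : Acy f) {j : V} (h : f j = none) :
    ht f j = 1 := by
  refine le_antisymm (ht_min f hacy j (by rw [fstep_iter_succ, h]; rfl)) (ht_pos f hacy j)

theorem f_ne_some_self (f : V → Option V) (hacy : Acy f) (j : V) : f j ≠ some j := by
  intro h
  have := ht_some f hacy h
  omega

/-- The root reached from `j` by iterating `f`, computed with fuel. -/
def rtAux (f : V → Option V) : ℕ → V → V
  | 0, j => j
  | n + 1, j => (f j).elim j (rtAux f n)

theorem rtAux_stable (f : V → Option V) (hacy : Acy f) :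
    ∀ n j, ht f j ≤ n → ∀ m, n ≤ m → rtAux f n j = rtAux f m j := by
  intro n
  induction n using Nat.strong_induction_on with
  | _ n IH =>
    intro j hj m hm
    cases n with
    | zero => exact absurd hj (by have := ht_pos f hacy j; omega)
    | succ n' =>
      obtain ⟨m', rfl⟩ := Nat.exists_eq_add_of_le hm
      rw [show n' + 1 + m' = (n' + m') + 1 by omega]
      cases hfj : f j with
      | none => simp [rtAux, hfj]
      | some i =>
        have hi : ht f i ≤ n' := by have := ht_some f hacy hfj; omega
        simp only [rtAux, hfj, Option.elim]
        exact IH n' (by omega) i hi (n' + m') (by omega)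

/-- The root of `j`. -/
noncomputable def rt (f : V → Option V) (j : V) : V := rtAux f (ht f j) j

theorem rt_none (f : V → Option V) (hacy : Acy f) {j : V} (h : f j = none) :
    rt f j = j := by
  rw [rt, ht_none f hacy h]; simp [rtAux, h]

theorem rt_some (f : V → Option V) (hacy : Acy f) {j i : V} (h : f j = some i) :
    rt f j = rt f i := by
  rw [rt, ht_some f hacy h]
  simp only [rtAux, h, Option.elim]
  rfl

theorem f_rt (f : V → Option V) (hacy : Acy f) (j : V) : f (rt f j) = none := by
  suffices H : ∀ n j, ht f j ≤ n → f (rt f j) = none from H (ht f j) j le_rfl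
  intro n
  induction n using Nat.strong_induction_on with
  | _ n IH =>
    intro j hj
    cases hfj : f j with
    | none => rwa [rt_none f hacy hfj]
    | some i =>
      rw [rt_some f hacy hfj]
      have := ht_some f hacy hfj
      exact IH (ht f i) (by omega) i le_rfl

theorem rt_rt (f : V → Option V) (hacy : Acy f) (j : V) : rt f (rt f j) = rt f j :=
  rt_none f hacy (f_rt f hacy j)

end RSF

namespace RSF
set_option maxHeartbeats 1000000

variable {V : Type*} [Fintype V] [DecidableEq V]

/-- The graph determined by a parent function. -/
def fGraph (f : V → Option V) : SimpleGraph V := SimpleGraph.fromRel (fun a b => f a = some b)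

theorem fGraph_adj (f : V → Option V) {a b : V} :
    (fGraph f).Adj a b ↔ a ≠ b ∧ (f a = some b ∨ f b = some a) :=
  SimpleGraph.fromRel_adj _ a b

theorem fGraph_le {G : SimpleGraph V} {f : V → Option V}
    (hadj : ∀ j i, f j = some i → G.Adj j i) : fGraph f ≤ G := by
  intro a b hab
  rw [fGraph_adj] at hab
  rcases hab.2 with h | h
  · exact hadj a b h
  · exact (hadj b a h).symm

theorem fGraph_adj_of_some {f : V → Option V} (hacy : Acy f) {a b : V}
    (h : f a = some b) : (fGraph f).Adj a b := by
  rw [fGraph_adj]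
  exact ⟨fun hab => f_ne_some_self f hacy a (hab ▸ h), Or.inl h⟩

theorem ht_adj {f : V → Option V} (hacy : Acy f) {a b : V} (h : (fGraph f).Adj a b) :
    ht f a = ht f b + 1 ∨ ht f b = ht f a + 1 := by
  rw [fGraph_adj] at h
  rcases h.2 with h' | h'
  · exact Or.inl (ht_some f hacy h')
  · exact Or.inr (ht_some f hacy h')

theorem rt_adj {f : V → Option V} (hacy : Acy f) {a b : V} (h : (fGraph f).Adj a b) :
    rt f a = rt f b := by
  rw [fGraph_adj] at h
  rcases h.2 with h' | h'
  · exact rt_some f hacy h'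
  · exact (rt_some f hacy h').symm

theorem rt_reachable {f : V → Option V} (hacy : Acy f) {a b : V}
    (h : (fGraph f).Reachable a b) : rt f a = rt f b := by
  obtain ⟨w⟩ := h
  induction w with
  | nil => rfl
  | cons hadj p ih => exact (rt_adj hacy hadj).trans ih

theorem reach_rt {f : V → Option V} (hacy : Acy f) (j : V) :
    (fGraph f).Reachable j (rt f j) := by
  suffices H : ∀ n j, ht f j ≤ n → (fGraph f).Reachable j (rt f j) from H (ht f j) j le_rfl
  intro n
  induction n using Nat.strong_induction_on with
  | _ n IH =>
    intro j hj
    cases hfj : f j with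
    | none => rw [rt_none f hacy hfj]
    | some i =>
      have hadj := fGraph_adj_of_some hacy hfj
      have := ht_some f hacy hfj
      rw [rt_some f hacy hfj]
      exact hadj.reachable.trans (IH (ht f i) (by omega) i le_rfl)

theorem fGraph_roots {f : V → Option V} (hacy : Acy f) (c : (fGraph f).ConnectedComponent) :
    ∃! v, v ∈ {j | f j = none} ∧ (fGraph f).connectedComponentMk v = c := by
  obtain ⟨j, rfl⟩ := c.exists_rep
  refine ⟨rt f j, ⟨f_rt f hacy j, ?_⟩, ?_⟩
  · exact (ConnectedComponent.eq).mpr (reach_rt hacy j).symm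
  · rintro w ⟨hw1, hw2⟩
    have hr : (fGraph f).Reachable w j := (ConnectedComponent.eq).mp hw2
    have := rt_reachable hacy hr
    rw [rt_none f hacy hw1] at this
    exact this

theorem edges_head {G : SimpleGraph V} {u v : V} (p : G.Walk u v) (hp : ¬p.Nil) :
    p.edges = s(u, p.getVert 1) :: p.tail.edges := by
  conv_lhs => rw [← Walk.cons_tail_eq p hp]
  rw [Walk.edges_cons]

theorem fGraph_isAcyclic {f : V → Option V} (hacy : Acy f) : (fGraph f).IsAcyclic := by
  intro v c hc
  -- pick a vertex of maximal height on the cycle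
  obtain ⟨x, hxmem, hxmax⟩ := Finset.exists_max_image c.support.toFinset (ht f)
    ⟨v, by simp [Walk.start_mem_support]⟩
  rw [List.mem_toFinset] at hxmem
  set c' : (fGraph f).Walk x x := c.rotate x hxmem with hc'def
  have hc' : c'.IsCycle := hc.rotate hxmem
  have hmax : ∀ y ∈ c'.support, ht f y ≤ ht f x := by
    intro y hy
    rcases List.eq_or_mem_of_mem_cons (by rwa [← Walk.support_eq_cons] : y ∈ x :: c'.support.tail) with
      rfl | hy'
    · exact le_rfl
    · have : y ∈ c.support.tail := (Walk.support_rotate c x hxmem).mem_iff.mp hy'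
      exact hxmax y (List.mem_toFinset.mpr (List.mem_of_mem_tail this))
  have hnn : ¬ c'.Nil := hc'.not_nil
  have hnn' : ¬ c'.reverse.Nil := by
    rw [Walk.not_nil_iff_lt_length] at hnn ⊢
    rwa [Walk.length_reverse]
  -- first neighbor along the cycle and along the reversed cycle
  set y := c'.getVert 1 with hy
  set z := c'.reverse.getVert 1 with hz
  have hay : (fGraph f).Adj x y := c'.adj_snd hnn
  have haz : (fGraph f).Adj x z := c'.reverse.adj_snd hnn'
  have hlen1 : 1 ≤ c'.length := by
    have := hc'.three_le_length; omega
  have hymem : y ∈ c'.support := by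
    rw [Walk.mem_support_iff_exists_getVert]
    exact ⟨1, rfl, by omega⟩
  have hzmem : z ∈ c'.support := by
    have : z ∈ c'.reverse.support := by
      rw [Walk.mem_support_iff_exists_getVert]
      exact ⟨1, rfl, by rw [Walk.length_reverse]; omega⟩
    rwa [Walk.support_reverse, List.mem_reverse] at this
  have hfy : f x = some y := by
    rcases (fGraph_adj f).mp hay with ⟨_, h | h⟩
    · exact h
    · have := ht_some f hacy h
      have := hmax y hymem
      omega
  have hfz : f x = some z := by
    rcases (fGraph_adj f).mp haz with ⟨_, h | h⟩
    · exact h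
    · have := ht_some f hacy h
      have := hmax z hzmem
      omega
  have hyz : y = z := by rw [hfy] at hfz; exact Option.some.inj hfz
  -- the first edge of c' equals its last edge, contradicting Nodup of edges
  have e1 : c'.edges = s(x, y) :: c'.tail.edges := edges_head c' hnn
  have e2 : c'.edges.reverse = s(x, z) :: c'.reverse.tail.edges := by
    rw [← Walk.edges_reverse]; exact edges_head c'.reverse hnn'
  have hT : c'.tail.edges ≠ [] := by
    intro h
    have hlen : 3 ≤ c'.edges.length := by rw [Walk.length_edges]; exact hc'.three_le_length
    rw [e1, h] at hlen; simp at hlen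
  obtain ⟨t, ht'⟩ : ∃ t, c'.tail.edges.getLast? = some t := by
    have := List.getLast?_isSome.mpr hT
    exact Option.isSome_iff_exists.mp this
  have h1 : c'.edges.getLast? = some t := by
    rw [e1, List.getLast?_cons, ht']; rfl
  have h2 : c'.edges.getLast? = some s(x, z) := by
    rw [← List.head?_reverse, e2]; rfl
  have ht2 : t = s(x, y) := by rw [h1] at h2; rw [hyz]; exact Option.some.inj h2
  have hnodup : c'.edges.Nodup := hc'.edges_nodup
  rw [e1] at hnodup
  exact (List.nodup_cons.mp hnodup).1 (ht2 ▸ List.mem_of_getLast? ht')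
end RSF

namespace RSF
section Backward

variable {V : Type*} [Fintype V] [DecidableEq V]
variable {H : SimpleGraph V} {R : Set V}

/-- The chosen root of the component of `j`. -/
noncomputable def rho
    (hroot : ∀ c : H.ConnectedComponent, ∃! v, v ∈ R ∧ H.connectedComponentMk v = c)
    (j : V) : V :=
  (hroot (H.connectedComponentMk j)).exists.choose

variable (hroot : ∀ c : H.ConnectedComponent, ∃! v, v ∈ R ∧ H.connectedComponentMk v = c)

theorem rho_mem (j : V) : rho hroot j ∈ R :=
  (hroot (H.connectedComponentMk j)).exists.choose_spec.1

theorem rho_mk (j : V) :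
    H.connectedComponentMk (rho hroot j) = H.connectedComponentMk j :=
  (hroot (H.connectedComponentMk j)).exists.choose_spec.2

theorem rho_eq_of_mk {a b : V}
    (h : H.connectedComponentMk a = H.connectedComponentMk b) :
    rho hroot a = rho hroot b :=
  (hroot (H.connectedComponentMk b)).unique ⟨rho_mem hroot a, (rho_mk hroot a).trans h⟩
    ⟨rho_mem hroot b, rho_mk hroot b⟩

theorem rho_of_mem {j : V} (hj : j ∈ R) : rho hroot j = j :=
  (hroot (H.connectedComponentMk j)).unique ⟨rho_mem hroot j, rho_mk hroot j⟩ ⟨hj, rfl⟩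

theorem reach_rho (j : V) : H.Reachable j (rho hroot j) :=
  ((ConnectedComponent.eq).mp (rho_mk hroot j)).symm

theorem rho_eq_of_adj {a b : V} (h : H.Adj a b) : rho hroot a = rho hroot b :=
  rho_eq_of_mk hroot ((ConnectedComponent.eq).mpr h.reachable)

omit [Fintype V] [DecidableEq V] in
/-- Distances from support vertices of a walk to its endpoint. -/
theorem dist_le_of_mem_support {x r y : V} (p : H.Walk x r) (hy : y ∈ p.support) :
    H.dist y r ≤ p.length ∧ (y ≠ x → H.dist y r + 1 ≤ p.length) := by
  obtain ⟨q1, q2, rfl⟩ := Walk.mem_support_iff_exists_append.mp hy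
  have h2 := SimpleGraph.dist_le q2
  rw [Walk.length_append]
  constructor
  · omega
  · intro hyx
    have : 1 ≤ q1.length := by
      cases q1 with
      | nil => exact absurd rfl hyx.symm
      | cons h q => simp [Walk.length_cons]
    omega

theorem exists_parent {j : V} (hj : j ∉ R) :
    ∃ b, H.Adj j b ∧ H.dist b (rho hroot j) + 1 = H.dist j (rho hroot j) := by
  have hne : j ≠ rho hroot j := by
    intro h
    exact hj (h ▸ rho_mem hroot j)
  obtain ⟨p, hp, hl⟩ := (reach_rho hroot j).exists_path_of_dist
  have hnil : ¬ p.Nil := Walk.not_nil_of_ne hne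
  set b := p.getVert 1 with hb
  have h : H.Adj j b := p.adj_snd hnil
  refine ⟨b, h, ?_⟩
  have h1 : H.dist b (rho hroot j) ≤ p.tail.length := SimpleGraph.dist_le p.tail
  have hlt : p.tail.length + 1 = p.length := Walk.length_tail_add_one hnil
  have h2 : H.dist j (rho hroot j) ≤ H.dist b (rho hroot j) + 1 := by
    obtain ⟨q', hq'⟩ := (h.reachable.symm.trans (reach_rho hroot j)).exists_walk_length_eq_dist
    have := SimpleGraph.dist_le (Walk.cons h q')
    rw [Walk.length_cons, hq'] at this
    omega
  omega

theorem parent_spec (hac : H.IsAcyclic) {j b b' : V} (hab : H.Adj j b) (hab' : H.Adj j b')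
    (hb : H.dist b (rho hroot j) < H.dist j (rho hroot j))
    (hb' : H.dist b' (rho hroot j) < H.dist j (rho hroot j)) : b = b' := by
  set r := rho hroot j with hr
  have key : ∀ c : V, H.Adj j c → H.dist c r < H.dist j r →
      ∃ (Q : H.Walk j r), Q.IsPath ∧ Q.getVert 1 = c := by
    intro c hjc hc
    have hrc : rho hroot c = r := rho_eq_of_adj hroot hjc.symm
    obtain ⟨p0, hp0, hl0⟩ := (reach_rho hroot c).exists_path_of_dist
    set p := p0.copy rfl hrc with hpdef
    have hp : p.IsPath := by rw [hpdef]; simpa using hp0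
    have hl : p.length = H.dist c r := by
      rw [hpdef, Walk.length_copy, hl0, hrc]
    have hj_not : j ∉ p.support := by
      intro hmem
      have := (dist_le_of_mem_support p hmem).1
      rw [hl] at this
      omega
    exact ⟨Walk.cons hjc p, hp.cons hj_not, by rw [Walk.getVert_cons_succ, Walk.getVert_zero]⟩
  obtain ⟨Q, hQ, hQ1⟩ := key b hab hb
  obtain ⟨Q', hQ', hQ'1⟩ := key b' hab' hb'
  have heq : (⟨Q, hQ⟩ : H.Path j r) = ⟨Q', hQ'⟩ := hac.path_unique _ _
  have hweq : Q = Q' := congrArg Subtype.val heq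
  rw [← hQ1, ← hQ'1, hweq]

theorem adj_dist_ne (hac : H.IsAcyclic) {a b : V} (hab : H.Adj a b) :
    H.dist a (rho hroot a) ≠ H.dist b (rho hroot b) := by
  intro heq
  have hr : rho hroot b = rho hroot a := rho_eq_of_adj hroot hab.symm
  rw [hr] at heq
  obtain ⟨p0, hp0, hl0⟩ := (reach_rho hroot b).exists_path_of_dist
  have hp : (p0.copy rfl hr).IsPath := by simpa using hp0
  have hl : (p0.copy rfl hr).length = H.dist b (rho hroot a) := by
    rw [Walk.length_copy, hl0, hr]
  by_cases ha : a ∈ (p0.copy rfl hr).support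
  · have := (dist_le_of_mem_support (p0.copy rfl hr) ha).2 hab.ne
    omega
  · have hQ : (Walk.cons hab (p0.copy rfl hr)).IsPath := hp.cons ha
    obtain ⟨q, hq, hql⟩ := (reach_rho hroot a).exists_path_of_dist
    have heq2 : (⟨Walk.cons hab (p0.copy rfl hr), hQ⟩ : H.Path a (rho hroot a)) = ⟨q, hq⟩ :=
      hac.path_unique _ _
    have hweq : Walk.cons hab (p0.copy rfl hr) = q := congrArg Subtype.val heq2
    have := congrArg Walk.length hweq
    rw [Walk.length_cons, hl, hql] at this
    omega

/-- The parent function of a rooted spanning forest. -/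
noncomputable def bwdf : V → Option V := fun j =>
  if hj : j ∈ R then none else some (exists_parent hroot hj).choose

theorem bwdf_none_iff {j : V} : bwdf hroot j = none ↔ j ∈ R := by
  unfold bwdf
  split
  · simpa
  · simpa

theorem bwdf_spec {j i : V} (h : bwdf hroot j = some i) :
    H.Adj j i ∧ H.dist i (rho hroot j) + 1 = H.dist j (rho hroot j) := by
  unfold bwdf at h
  split at h
  · simp at h
  · next hj =>
    obtain rfl : (exists_parent hroot hj).choose = i := Option.some.inj h
    exact (exists_parent hroot hj).choose_spec

theorem bwdf_acy : Acy (bwdf hroot) := by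
  intro j
  suffices Hn : ∀ n j, H.dist j (rho hroot j) ≤ n → ∃ k, (fstep (bwdf hroot))^[k] (some j) = none from
    Hn _ j le_rfl
  intro n
  induction n using Nat.strong_induction_on with
  | _ n IH =>
    intro j hj
    cases hfj : bwdf hroot j with
    | none => exact ⟨1, by rw [Function.iterate_one]; simp [fstep, hfj]⟩
    | some i =>
      obtain ⟨hadj, hdist⟩ := bwdf_spec hroot hfj
      have hri : rho hroot i = rho hroot j := rho_eq_of_adj hroot hadj.symm
      obtain ⟨k, hk⟩ := IH (H.dist i (rho hroot i)) (by rw [hri]; omega) i le_rfl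
      exact ⟨k + 1, by rw [fstep_iter_succ, hfj]; exact hk⟩

theorem bwdf_eq_of_adj (hac : H.IsAcyclic) {a b : V} (hab : H.Adj a b)
    (hlt : H.dist b (rho hroot b) < H.dist a (rho hroot a)) :
    bwdf hroot a = some b := by
  have ha : a ∉ R := by
    intro hmem
    rw [rho_of_mem hroot hmem, SimpleGraph.dist_self] at hlt
    omega
  have hfa : bwdf hroot a = some (exists_parent hroot ha).choose := by
    unfold bwdf; rw [dif_neg ha]
  obtain ⟨hadj', hdist'⟩ := bwdf_spec hroot hfa
  have hr : rho hroot b = rho hroot a := rho_eq_of_adj hroot hab.symm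
  rw [hfa]
  congr 1
  exact parent_spec hroot hac hadj' hab (by omega) (by rw [hr] at hlt; exact hlt)

end Backward
end RSF

namespace RSF
section Equivalence

variable {V : Type*} [Fintype V] [DecidableEq V]

/-- A good parent function for `G`. -/
def Good (G : SimpleGraph V) (f : V → Option V) : Prop :=
  (∀ j i, f j = some i → G.Adj j i) ∧ Acy f

theorem ht_le_of_walk {f : V → Option V} (hacy : Acy f) {a b : V}
    (w : (fGraph f).Walk a b) : ht f a ≤ ht f b + w.length := by
  induction w with
  | nil => simp
  | @cons u c _ h p ih =>
    have : ht f u ≤ ht f c + 1 := by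
      rcases ht_adj hacy h with h' | h' <;> omega
    rw [Walk.length_cons]
    omega

theorem rho_fGraph {f : V → Option V} (hacy : Acy f) (j : V) :
    rho (fGraph_roots hacy) j = rt f j :=
  (fGraph_roots hacy ((fGraph f).connectedComponentMk j)).unique
    ⟨rho_mem _ j, rho_mk _ j⟩
    ⟨f_rt f hacy j, (ConnectedComponent.eq).mpr (reach_rt hacy j).symm⟩

theorem dist_rt_add_one {f : V → Option V} (hacy : Acy f) (j : V) :
    (fGraph f).dist j (rt f j) + 1 = ht f j := by
  have hupper : ∀ n j, ht f j ≤ n → (fGraph f).dist j (rt f j) + 1 ≤ ht f j := by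
    intro n
    induction n using Nat.strong_induction_on with
    | _ n IH =>
      intro j hj
      cases hfj : f j with
      | none =>
        rw [rt_none f hacy hfj, SimpleGraph.dist_self, ht_none f hacy hfj]
      | some i =>
        have hhts := ht_some f hacy hfj
        have hIH := IH (ht f i) (by omega) i le_rfl
        have hadj : (fGraph f).Adj j i := fGraph_adj_of_some hacy hfj
        obtain ⟨q, hq⟩ := (reach_rt hacy i).exists_walk_length_eq_dist
        have hd : (fGraph f).dist j (rt f j) ≤ q.length + 1 := by
          have hrteq : rt f j = rt f i := rt_some f hacy hfj
          have := SimpleGraph.dist_le ((Walk.cons hadj q).copy rfl hrteq.symm)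
          rwa [Walk.length_copy, Walk.length_cons] at this
        omega
  have hlower : ht f j ≤ (fGraph f).dist j (rt f j) + 1 := by
    obtain ⟨q, hq⟩ := (reach_rt hacy j).exists_walk_length_eq_dist
    have := ht_le_of_walk hacy q
    rw [hq, ht_none f hacy (f_rt f hacy j)] at this
    omega
  have := hupper (ht f j) j le_rfl
  omega

theorem bwdf_fGraph {f : V → Option V} (hacy : Acy f) :
    bwdf (fGraph_roots hacy) = f := by
  funext j
  cases hfj : f j with
  | none => exact (bwdf_none_iff (fGraph_roots hacy)).mpr hfj
  | some i =>
    apply bwdf_eq_of_adj (fGraph_roots hacy) (fGraph_isAcyclic hacy)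
      (fGraph_adj_of_some hacy hfj)
    rw [rho_fGraph hacy, rho_fGraph hacy]
    have h1 := dist_rt_add_one hacy i
    have h2 := dist_rt_add_one hacy j
    have := ht_some f hacy hfj
    omega

theorem fGraph_bwdf {H : SimpleGraph V} {R : Set V} (hac : H.IsAcyclic)
    (hroot : ∀ c : H.ConnectedComponent, ∃! v, v ∈ R ∧ H.connectedComponentMk v = c) :
    fGraph (bwdf hroot) = H := by
  ext a b
  rw [fGraph_adj]
  constructor
  · rintro ⟨hne, h | h⟩
    · exact (bwdf_spec hroot h).1
    · exact ((bwdf_spec hroot h).1).symm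
  · intro hab
    refine ⟨hab.ne, ?_⟩
    rcases Nat.lt_or_ge (H.dist b (rho hroot b)) (H.dist a (rho hroot a)) with h | h
    · exact Or.inl (bwdf_eq_of_adj hroot hac hab h)
    · have hne := adj_dist_ne hroot hac hab
      exact Or.inr (bwdf_eq_of_adj hroot hac hab.symm (by omega))

/-- The bijection between good parent functions and rooted spanning forests. -/
noncomputable def equivRSF (G : SimpleGraph V) :
    {f : V → Option V // Good G f} ≃ RootedSpanningForest G where
  toFun := fun p =>
    ⟨(fGraph p.1, {j | p.1 j = none}), fGraph_le p.2.1, fGraph_isAcyclic p.2.2,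
      fGraph_roots p.2.2⟩
  invFun := fun q =>
    ⟨bwdf q.2.2.2, fun j i h => q.2.1 ((bwdf_spec q.2.2.2 h).1), bwdf_acy q.2.2.2⟩
  left_inv := by
    rintro ⟨f, hadj, hacy⟩
    apply Subtype.ext
    exact bwdf_fGraph hacy
  right_inv := by
    rintro ⟨⟨H, R⟩, hle, hac, hroot⟩
    apply Subtype.ext
    dsimp only
    have hG : fGraph (bwdf hroot) = H := fGraph_bwdf hac hroot
    have hR : {j | bwdf hroot j = none} = R := by
      ext j
      exact bwdf_none_iff hroot
    rw [Prod.mk.injEq]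
    exact ⟨hG, hR⟩

end Equivalence
end RSF




namespace RSF
set_option maxHeartbeats 1000000
open SimpleGraph Finset Matrix
open scoped Classical

variable {V : Type*} [Fintype V] [DecidableEq V]

/-- The possible values of a parent function at `j`. -/
noncomputable def options (G : SimpleGraph V) (j : V) : Finset (Option V) :=
  insert none ((G.neighborFinset j).image some)

/-- Candidate rows. -/
noncomputable def rowv (j : V) (o : Option V) : V → ℤ :=
  o.elim (Pi.single j 1) (fun i => Pi.single j 1 - Pi.single i 1)

/-- The matrix whose rows are determined by the parent function `f`. -/
noncomputable def Mf (f : V → Option V) : Matrix V V ℤ :=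
  Matrix.of (fun j => rowv j (f j))

theorem row_decomp (G : SimpleGraph V) (j : V) :
    (1 + G.lapMatrix ℤ) j = ∑ o ∈ options G j, rowv j o := by
  funext c
  have hnone : (none : Option V) ∉ (G.neighborFinset j).image some := by simp
  rw [options, Finset.sum_insert hnone,
    Finset.sum_image (fun a _ b _ h => Option.some.inj h)]
  simp only [Finset.sum_apply, Pi.add_apply, rowv, Option.elim, Pi.sub_apply]
  rw [Finset.sum_sub_distrib, Finset.sum_const]
  simp only [Pi.single_apply, Matrix.add_apply, Matrix.one_apply, SimpleGraph.lapMatrix,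
    Matrix.sub_apply, SimpleGraph.degMatrix, Matrix.diagonal_apply,
    SimpleGraph.adjMatrix_apply, Finset.sum_ite_eq', SimpleGraph.mem_neighborFinset,
    ← SimpleGraph.card_neighborFinset_eq_degree]
  by_cases hjc : j = c
  · subst hjc
    simp [G.irrefl]
  · by_cases hadj : G.Adj j c
    · simp [hjc, Ne.symm hjc, hadj]
    · simp [hjc, Ne.symm hjc, hadj]

theorem det_one_add_lap (G : SimpleGraph V) :
    (1 + G.lapMatrix ℤ).det = ∑ f ∈ Fintype.piFinset (options G), (Mf f).det := by
  have h1 : (1 + G.lapMatrix ℤ) = fun j => ∑ o ∈ options G j, rowv j o := by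
    funext j
    exact row_decomp G j
  show Matrix.detRowAlternating (1 + G.lapMatrix ℤ) = _
  refine (congrArg Matrix.detRowAlternating h1).trans ?_
  have := (Matrix.detRowAlternating (R := ℤ) (n := V)).toMultilinearMap.map_sum_finset
    (g := fun j o => rowv j o) (A := options G)
  exact this

end RSF

namespace RSF
variable {V : Type*} [Fintype V] [DecidableEq V]

theorem exists_periodic (f : V → Option V) (h : ¬ Acy f) :
    ∃ (k : ℕ) (v : ℕ → V), 0 < k ∧ v 0 = v k ∧ ∀ i, f (v i) = some (v (i + 1)) := by
  rw [Acy] at h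
  push_neg at h
  obtain ⟨j, hj⟩ := h
  have hex : ∀ k : ℕ, ∃ y, (fstep f)^[k] (some j) = some y := by
    intro k
    cases hk : (fstep f)^[k] (some j) with
    | none => exact absurd hk (hj k)
    | some y => exact ⟨y, rfl⟩
  choose u hu using hex
  obtain ⟨k1, k2, hne, hueq⟩ := Finite.exists_ne_map_eq_of_infinite u
  wlog hlt : k1 < k2 generalizing k1 k2
  · exact this k2 k1 hne.symm hueq.symm (by omega)
  set x := u k1 with hx
  set k := k2 - k1 with hk
  have hkpos : 0 < k := by omega
  have hper : (fstep f)^[k] (some x) = some x := by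
    have : (fstep f)^[k + k1] (some j) = (fstep f)^[k] ((fstep f)^[k1] (some j)) :=
      Function.iterate_add_apply _ k k1 _
    rw [hu k1] at this
    have hkk : k + k1 = k2 := by omega
    rw [hkk, hu k2] at this
    rw [← this, ← hueq]
  have hpern : ∀ n : ℕ, (fstep f)^[n * k] (some x) = some x := by
    intro n
    induction n with
    | zero => simp
    | succ m ih =>
      rw [Nat.succ_mul, Function.iterate_add_apply, hper, ih]
  have hex2 : ∀ i : ℕ, ∃ y, (fstep f)^[i] (some x) = some y := by
    intro i
    cases hi : (fstep f)^[i] (some x) with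
    | none =>
      exfalso
      have hik : i ≤ i * k + k := by nlinarith [hkpos]
      have : (fstep f)^[(i * k + k) - i + i] (some x) = none := by
        rw [Function.iterate_add_apply, hi, fstep_iter_none]
      rw [Nat.sub_add_cancel hik] at this
      have h2 := hpern (i + 1)
      rw [Nat.succ_mul] at h2
      rw [h2] at this
      simp at this
    | some y => exact ⟨y, rfl⟩
  choose v hv using hex2
  refine ⟨k, v, hkpos, ?_, ?_⟩
  · have h0 : (fstep f)^[0] (some x) = some x := rfl
    have hkx : (fstep f)^[k] (some x) = some x := hper
    have := hv 0
    rw [h0] at this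
    have h2 := hv k
    rw [hkx] at h2
    rw [← Option.some.inj this, ← Option.some.inj h2]
  · intro i
    have h1 := hv i
    have h2 := hv (i + 1)
    rw [Function.iterate_succ_apply', h1] at h2
    exact h2

theorem det_Mf_zero (f : V → Option V) (hna : ¬ Acy f) : (Mf f).det = 0 := by
  obtain ⟨k, v, hk, hv0k, hstep⟩ := exists_periodic f hna
  apply Matrix.exists_vecMul_eq_zero_iff.mp
  refine ⟨fun y => (((Finset.range k).filter (fun i => v i = y)).card : ℤ), ?_, ?_⟩
  · intro hzero
    have h0 := congrFun hzero (v 0)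
    simp only [Pi.zero_apply] at h0
    have : (0 : ℕ) ∈ (Finset.range k).filter (fun i => v i = v 0) := by
      simp [hk]
    have hcard := Finset.card_pos.mpr ⟨0, this⟩
    omega
  · funext c
    have hvm : ∀ y, ((((Finset.range k).filter (fun i => v i = y)).card : ℤ)) * Mf f y c
        = ∑ i ∈ (Finset.range k).filter (fun i => v i = y), Mf f (v i) c := by
      intro y
      rw [Finset.sum_congr rfl (fun i hi => by
        rw [(Finset.mem_filter.mp hi).2]), Finset.sum_const, nsmul_eq_mul]
    have hshow : ((fun y => (((Finset.range k).filter (fun i => v i = y)).card : ℤ)) ᵥ* Mf f) c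
        = ∑ y : V, ((((Finset.range k).filter (fun i => v i = y)).card : ℤ)) * Mf f y c := rfl
    rw [hshow, Finset.sum_congr rfl (fun y _ => hvm y),
      Finset.sum_fiberwise_of_maps_to (fun i _ => Finset.mem_univ (v i))]
    have hrow : ∀ i : ℕ, Mf f (v i) c =
        (Pi.single (v i) (1 : ℤ) : V → ℤ) c - (Pi.single (v (i + 1)) (1 : ℤ) : V → ℤ) c := by
      intro i
      show rowv (v i) (f (v i)) c = _
      rw [hstep i]
      rfl
    rw [Finset.sum_congr rfl (fun i _ => hrow i),
      Finset.sum_range_sub' (f := fun i => (Pi.single (v i) (1 : ℤ) : V → ℤ) c), ← hv0k,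
      sub_self]
    rfl

theorem det_Mf_one (f : V → Option V) (hacy : Acy f) : (Mf f).det = 1 := by
  have hbt : (Mf f).BlockTriangular (fun j => -(ht f j : ℤ)) := by
    intro i j hij
    have hij' : ht f i < ht f j := by
      simp only [neg_lt_neg_iff, Nat.cast_lt] at hij
      exact hij
    show rowv i (f i) j = 0
    cases hfi : f i with
    | none =>
      have : j ≠ i := fun h => by subst h; omega
      simp [rowv, Pi.single_apply, this]
    | some c =>
      have h1 : j ≠ i := fun h => by subst h; omega
      have h2 : j ≠ c := by
        intro h
        subst h
        have := ht_some f hacy hfi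
        omega
      simp [rowv, Pi.single_apply, h1, h2]
  rw [hbt.det]
  apply Finset.prod_eq_one
  intro a _
  have hblock : (Mf f).toSquareBlock (fun j => -(ht f j : ℤ)) a = 1 := by
    ext i c
    rw [Matrix.toSquareBlock_def]
    by_cases hic : i = c
    · subst hic
      rw [Matrix.one_apply_eq]
      show rowv i.1 (f i.1) i.1 = 1
      cases hfi : f i.1 with
      | none => simp [rowv, Pi.single_apply]
      | some b =>
        have : b ≠ i.1 := fun h => f_ne_some_self f hacy i.1 (h ▸ hfi)
        simp [rowv, Pi.single_apply, this]
    · rw [Matrix.one_apply_ne hic]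
      have hic' : i.1 ≠ c.1 := fun h => hic (Subtype.ext h)
      have hht : ht f i.1 = ht f c.1 := by
        have h1 : -(ht f i.1 : ℤ) = a := i.2
        have h2 : -(ht f c.1 : ℤ) = a := c.2
        omega
      show rowv i.1 (f i.1) c.1 = 0
      cases hfi : f i.1 with
      | none => simp [rowv, Pi.single_apply, Ne.symm hic']
      | some b =>
        have h2 : c.1 ≠ b := by
          intro h
          have := ht_some f hacy hfi
          rw [← h] at this
          omega
        simp [rowv, Pi.single_apply, Ne.symm hic', h2]
  rw [hblock, Matrix.det_one]

end RSF


open scoped Classical in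
theorem numRootedSpanningForests_eq_det_one_add_lap'
    {V : Type*} [Fintype V] [DecidableEq V] (G : SimpleGraph V) :
    (numRootedSpanningForests G : ℤ) = (1 + lap G).det := by
  classical
  have hdet := RSF.det_one_add_lap G
  have hsum : ∑ f ∈ Fintype.piFinset (RSF.options G), (RSF.Mf f).det
      = ∑ f ∈ Fintype.piFinset (RSF.options G), (if RSF.Acy f then (1 : ℤ) else 0) := by
    refine Finset.sum_congr rfl fun f _ => ?_
    by_cases h : RSF.Acy f
    · rw [if_pos h, RSF.det_Mf_one f h]
    · rw [if_neg h, RSF.det_Mf_zero f h]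
  have hboole : ∑ f ∈ Fintype.piFinset (RSF.options G), (if RSF.Acy f then (1 : ℤ) else 0)
      = (((Fintype.piFinset (RSF.options G)).filter (fun f => RSF.Acy f)).card : ℤ) := by
    rw [Finset.sum_boole]
  have hmem : ∀ f : V → Option V,
      f ∈ Fintype.piFinset (RSF.options G) ↔ ∀ j i, f j = some i → G.Adj j i := by
    intro f
    rw [Fintype.mem_piFinset]
    constructor
    · intro h j i hji
      have := h j
      rw [RSF.options, Finset.mem_insert, hji] at this
      rcases this with h' | h'
      · exact absurd h' (by simp)
      · obtain ⟨a, ha, ha'⟩ := Finset.mem_image.mp h'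
        obtain rfl : a = i := Option.some.inj ha'
        exact (SimpleGraph.mem_neighborFinset G j a).mp ha
    · intro h j
      rw [RSF.options, Finset.mem_insert]
      cases hfj : f j with
      | none => exact Or.inl rfl
      | some i =>
        refine Or.inr (Finset.mem_image.mpr ⟨i, ?_, rfl⟩)
        exact (SimpleGraph.mem_neighborFinset G j i).mpr (h j i hfj)
  have hset : (Fintype.piFinset (RSF.options G)).filter (fun f => RSF.Acy f)
      = Finset.univ.filter (fun f => RSF.Good G f) := by
    ext f
    rw [Finset.mem_filter, Finset.mem_filter, hmem f]
    simp [RSF.Good, and_comm]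
  have hcard : numRootedSpanningForests G
      = (Finset.univ.filter (fun f => RSF.Good G f)).card := by
    rw [numRootedSpanningForests, Nat.card_congr (RSF.equivRSF G).symm,
      Nat.card_eq_fintype_card, Fintype.card_subtype]
  rw [hcard, show (1 + lap G) = (1 + G.lapMatrix ℤ) from rfl, hdet, hsum, hboole, hset]

theorem numRootedSpanningForests_eq_det_one_add_lap
    {V : Type*} [Fintype V] [DecidableEq V] (G : SimpleGraph V) :
    (numRootedSpanningForests G : ℤ) = (1 + lap G).det :=
  numRootedSpanningForests_eq_det_one_add_lap' G
end

section
/- Let P(z) = z^p + a₁z^{p+1} + … + a_{s−1}z^{p+s−1} + z^{p+s} be a bimonic integer Laurent polynomial and let 𝒜 be its s×s companion matrix (the matrix with I_{s−1} in the top-right block and last row (−1, −a₁, …, −a_{s−1})). Let Tₙ = circ(0,1,0,…,0) be the n×n cyclic shift matrix and L = P(Tₙ) : ℤⁿ → ℤⁿ. Then coker(L) ≅ coker(𝒜ⁿ − I_s). -/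
open scoped Classical in
/-- The cokernel `ℤ^α / im M` of an integer matrix `M`. -/
noncomputable abbrev coker {α : Type*} [Fintype α] (M : Matrix α α ℤ) :=
  (α → ℤ) ⧸ LinearMap.range (Matrix.toLin' M)

/-- The companion matrix of the bimonic integer Laurent polynomial
`P(z) = z^p (c 0 + c 1 · z + ⋯ + c s · z^s)` (with `c 0 = c s = 1`): the `s × s` matrix
with the identity block `I_{s-1}` in the top-right corner and bottom row
`(-c 0, -c 1, …, -c (s-1))`. -/
def compMat (s : ℕ) (c : ℕ → ℤ) : Matrix (Fin s) (Fin s) ℤ :=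
  Matrix.of fun i j =>
    if (i : ℕ) + 1 = s then -c j else if (j : ℕ) = (i : ℕ) + 1 then 1 else 0

/-- The matrix `P(Tₙ)` where `Tₙ` is the `n × n` cyclic shift matrix and
`P(z) = z^p (c 0 + c 1 · z + ⋯ + c s · z^s)` is an integer Laurent polynomial:
entrywise, `P(Tₙ) i j = ∑ t, c t · [j = i + p + t mod n]`. -/
def laurentShift (n : ℕ) (p : ℤ) (s : ℕ) (c : ℕ → ℤ) : Matrix (ZMod n) (ZMod n) ℤ :=
  Matrix.of fun i j =>
    ∑ t ∈ Finset.range (s + 1), c t * (if j = i + ((p + t : ℤ) : ZMod n) then 1 else 0)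

set_option linter.unusedSectionVars false

open Matrix

set_option linter.unusedSectionVars false

namespace LCK

variable {n : ℕ} [NeZero n]

/-- shift matrix: column `j` is the delta at `j - q`. -/
def sh (n : ℕ) (q : ZMod n) : Matrix (ZMod n) (ZMod n) ℤ :=
  Matrix.of fun i j => if j = i + q then 1 else 0

lemma sh_mul_apply {β : Type*} [Fintype β] (q : ZMod n) (X : Matrix (ZMod n) β ℤ) (a : ZMod n)
    (k : β) : (sh n q * X) a k = X (a + q) k := by
  simp [sh, Matrix.mul_apply]

lemma mul_sh_apply {β : Type*} [Fintype β] (q : ZMod n) (X : Matrix β (ZMod n) ℤ) (a : β)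
    (b : ZMod n) : (X * sh n q) a b = X a (b - q) := by
  simp only [sh, Matrix.mul_apply, of_apply, mul_ite, mul_one, mul_zero]
  rw [Finset.sum_eq_single (b - q)]
  · rw [if_pos (by ring)]
  · intro b1 _ hb1
    rw [if_neg fun h => hb1 (by rw [h]; ring)]
  · simp

lemma sh_mul_sh (q r : ZMod n) : sh n q * sh n r = sh n (q + r) := by
  ext i j
  rw [sh_mul_apply]
  simp [sh, add_assoc]

lemma sh_zero : sh n (0 : ZMod n) = 1 := by
  ext i j
  simp [sh, Matrix.one_apply, eq_comm]

noncomputable instance (q : ZMod n) : Invertible (sh n q) :=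
  ⟨sh n (-q), by rw [sh_mul_sh, neg_add_cancel, sh_zero], by
    rw [sh_mul_sh, add_neg_cancel, sh_zero]⟩

lemma sh_mulVec (q : ZMod n) (x : ZMod n → ℤ) (i : ZMod n) :
    (sh n q *ᵥ x) i = x (i + q) := by
  simp [sh, Matrix.mulVec, dotProduct]

lemma laurent_factor (p : ℤ) (s : ℕ) (c : ℕ → ℤ) :
    laurentShift n p s c = laurentShift n 0 s c * sh n ((p : ℤ) : ZMod n) := by
  ext i j
  rw [mul_sh_apply]
  simp only [laurentShift, of_apply]
  refine Finset.sum_congr rfl fun t _ => ?_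
  congr 1
  have : ((p + (t : ℤ) : ℤ) : ZMod n) = (p : ZMod n) + ((0 + (t : ℤ) : ℤ) : ZMod n) := by
    push_cast; ring
  rw [this]
  refine if_congr ?_ rfl rfl
  rw [sub_eq_iff_eq_add]
  constructor <;> intro h <;> rw [h] <;> ring


section Comp
variable (s : ℕ) (c : ℕ → ℤ)

/-- `C`, the transpose of the companion matrix: multiplication by `z` on `ℤ[z]/(Q)`. -/
def Cm : Matrix (Fin (s+1)) (Fin (s+1)) ℤ := (compMat (s+1) c)ᵀ

lemma Cm_apply (i j : Fin (s+1)) :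
    Cm s c i j = if (j : ℕ) = s then -c i else if (i : ℕ) = (j : ℕ) + 1 then 1 else 0 := by
  simp only [Cm, transpose_apply, compMat, of_apply, Nat.succ_inj]

/-- coordinates of `z^m` in `ℤ[z]/(Q)`. -/
def uvec (m : ℕ) : Fin (s+1) → ℤ := (Cm s c ^ m) *ᵥ Pi.single 0 1

lemma fin_delta_sum {m : ℕ} (f : Fin m → ℤ) (t : ℕ) (ht : t < m) :
    (∑ j : Fin m, f j * if (j : ℕ) = t then 1 else 0) = f ⟨t, ht⟩ := by
  rw [Finset.sum_eq_single (⟨t, ht⟩ : Fin m)]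
  · simp
  · intro j _ hj
    rw [if_neg (fun h => hj (Fin.ext h)), mul_zero]
  · simp

lemma uvec_succ (m : ℕ) : uvec s c (m+1) = Cm s c *ᵥ uvec s c m := by
  rw [uvec, uvec, pow_succ', Matrix.mulVec_mulVec]

lemma uvec_lt (t : ℕ) (h : t < s + 1) :
    uvec s c t = fun i : Fin (s+1) => if (i : ℕ) = t then (1:ℤ) else 0 := by
  induction t with
  | zero =>
    funext i
    rw [uvec, pow_zero, Matrix.one_mulVec]
    rw [Pi.single_apply]
    exact if_congr (by rw [Fin.ext_iff, Fin.val_zero]) rfl rfl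
  | succ t ih =>
    have ht : t < s + 1 := Nat.lt_of_succ_lt h
    funext i
    rw [uvec_succ, ih ht]
    show (∑ j, Cm s c i j * if (j : ℕ) = t then 1 else 0) = _
    rw [fin_delta_sum _ t ht, Cm_apply]
    have : (t : ℕ) ≠ s := by omega
    simp [this]

lemma uvec_top : uvec s c (s+1) = fun i : Fin (s+1) => -c (i : ℕ) := by
  funext i
  rw [uvec_succ, uvec_lt s c s (Nat.lt_succ_self s)]
  show (∑ j, Cm s c i j * if (j : ℕ) = s then 1 else 0) = _
  rw [fin_delta_sum _ s (Nat.lt_succ_self s), Cm_apply]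
  simp

lemma Q_uvec (hcs : c (s+1) = 1) :
    ∑ t ∈ Finset.range (s+2), c t • uvec s c t = 0 := by
  funext i
  show (∑ t ∈ Finset.range (s+2), c t • uvec s c t) i = 0
  rw [Finset.sum_apply]
  rw [show s + 2 = (s+1) + 1 from rfl, Finset.sum_range_succ]
  have h1 : ∑ t ∈ Finset.range (s+1), (c t • uvec s c t) i
      = ∑ t ∈ Finset.range (s+1), if (i : ℕ) = t then c t else 0 := by
    refine Finset.sum_congr rfl fun t ht => ?_
    rw [uvec_lt s c t (Finset.mem_range.mp ht)]
    simp [mul_ite]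
  rw [h1, Finset.sum_ite_eq, uvec_top, hcs]
  have : (i : ℕ) ∈ Finset.range (s+1) := Finset.mem_range.mpr i.isLt
  simp [this]

end Comp

section Inter
variable (n : ℕ) [NeZero n] (s : ℕ) (c : ℕ → ℤ)

/-- `Kp` columns: column `k` is the delta at `-k`. -/
def Kp : Matrix (ZMod n) (Fin (s+1)) ℤ :=
  Matrix.of fun a k => if a = -((k : ℕ) : ZMod n) then 1 else 0

def Fm : Matrix (ZMod n) (Fin (s+1)) ℤ :=
  Matrix.of fun a k => if a = 0 ∧ (k : ℕ) = s then 1 else 0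

lemma M0_apply (i j : ZMod n) :
    laurentShift n 0 (s+1) c i j
      = ∑ t ∈ Finset.range (s+2), c t * (if j = i + ((t : ℕ) : ZMod n) then 1 else 0) := by
  simp only [laurentShift, of_apply]
  refine Finset.sum_congr rfl fun t _ => ?_
  norm_num

lemma sh_comm (q : ZMod n) :
    sh n q * laurentShift n 0 (s+1) c = laurentShift n 0 (s+1) c * sh n q := by
  ext a b
  rw [sh_mul_apply, mul_sh_apply, M0_apply, M0_apply]
  refine Finset.sum_congr rfl fun t _ => ?_
  refine congrArg _ (if_congr ?_ rfl rfl)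
  rw [sub_eq_iff_eq_add]
  constructor <;> intro h <;> rw [h] <;> ring

lemma mul_Fm_apply (X : Matrix (ZMod n) (ZMod n) ℤ) (a : ZMod n) (k : Fin (s+1)) :
    (X * Fm n s) a k = X a 0 * (if (k : ℕ) = s then 1 else 0) := by
  simp only [Fm, Matrix.mul_apply, of_apply]
  rw [Finset.sum_eq_single (0 : ZMod n)]
  · by_cases h : (k : ℕ) = s <;> simp [h]
  · intro b _ hb
    rw [if_neg (fun h => hb h.1), mul_zero]
  · simp

lemma inter1 (hcs : c (s+1) = 1) :
    Kp n s * Cm s c = sh n 1 * Kp n s - laurentShift n 0 (s+1) c * Fm n s := by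
  ext a k
  rw [Matrix.sub_apply, sh_mul_apply, mul_Fm_apply, M0_apply]
  by_cases hk : (k : ℕ) = s
  · -- last column
    rw [if_pos hk, mul_one]
    have hL : (Kp n s * Cm s c) a k
        = ∑ m : Fin (s+1), (if a = -((m : ℕ) : ZMod n) then (1:ℤ) else 0) * (-c (m : ℕ)) := by
      rw [Matrix.mul_apply]
      refine Finset.sum_congr rfl fun m _ => ?_
      rw [Kp, Cm_apply, of_apply, if_pos hk]
    rw [hL,
      Fin.sum_univ_eq_sum_range (fun t => (if a = -((t : ℕ) : ZMod n) then (1:ℤ) else 0) * (-c t)) (s+1)]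
    have hR : ∑ t ∈ Finset.range (s+2), c t * (if (0:ZMod n) = a + ((t : ℕ) : ZMod n) then (1:ℤ) else 0)
        = (∑ t ∈ Finset.range (s+1), c t * (if a = -((t : ℕ) : ZMod n) then (1:ℤ) else 0))
          + (if a = -(((s+1:ℕ)) : ZMod n) then (1:ℤ) else 0) := by
      rw [Finset.sum_range_succ, hcs, one_mul]
      refine congrArg₂ _ (Finset.sum_congr rfl fun t _ => congrArg _ (if_congr ?_ rfl rfl))
        (if_congr ?_ rfl rfl)
      · rw [eq_comm, add_eq_zero_iff_eq_neg]
      · rw [eq_comm, add_eq_zero_iff_eq_neg]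
    rw [hR]
    have hK : Kp n s (a + 1) k = if a = -(((s+1:ℕ)) : ZMod n) then (1:ℤ) else 0 := by
      rw [Kp, of_apply]
      refine if_congr ?_ rfl rfl
      rw [hk]; push_cast
      constructor <;> intro h <;> linear_combination h
    rw [hK]
    have hneg : ∑ t ∈ Finset.range (s+1), (if a = -((t : ℕ) : ZMod n) then (1:ℤ) else 0) * (-c t)
        = -∑ t ∈ Finset.range (s+1), c t * (if a = -((t : ℕ) : ZMod n) then (1:ℤ) else 0) := by
      rw [← Finset.sum_neg_distrib]
      exact Finset.sum_congr rfl fun t _ => by ring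
    rw [hneg]
    ring
  · -- other columns
    rw [if_neg hk, mul_zero, sub_zero]
    have hk1 : (k : ℕ) + 1 < s + 1 := by omega
    have hL : (Kp n s * Cm s c) a k
        = ∑ m : Fin (s+1), (if a = -((m : ℕ) : ZMod n) then (1:ℤ) else 0)
            * (if (m : ℕ) = (k : ℕ) + 1 then 1 else 0) := by
      rw [Matrix.mul_apply]
      refine Finset.sum_congr rfl fun m _ => ?_
      rw [Kp, Cm_apply, of_apply, if_neg hk]
    rw [hL, fin_delta_sum (fun m => if a = -((m : ℕ) : ZMod n) then (1:ℤ) else 0) _ hk1]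
    rw [Kp, of_apply]
    refine if_congr ?_ rfl rfl
    push_cast
    constructor <;> intro h <;> linear_combination h

lemma inter_pow (hcs : c (s+1) = 1) (m : ℕ) :
    ∃ G : Matrix (ZMod n) (Fin (s+1)) ℤ, Kp n s * Cm s c ^ m + laurentShift n 0 (s+1) c * G
      = sh n ((m : ℕ) : ZMod n) * Kp n s := by
  induction m with
  | zero =>
    refine ⟨0, ?_⟩
    rw [pow_zero, Matrix.mul_one, Matrix.mul_zero, add_zero, Nat.cast_zero, sh_zero, Matrix.one_mul]
  | succ m ih =>
    obtain ⟨G, hG⟩ := ih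
    refine ⟨G * Cm s c + (sh n ((m : ℕ) : ZMod n) * Fm n s : Matrix (ZMod n) (Fin (s+1)) ℤ), ?_⟩
    have hsh1 : sh n 1 * Kp n s
        = Kp n s * Cm s c + laurentShift n 0 (s+1) c * Fm n s := by
      rw [inter1 n s c hcs]; exact (sub_add_cancel _ _).symm
    have hcast : (((m+1:ℕ)) : ZMod n) = ((m : ℕ) : ZMod n) + 1 := by push_cast; ring
    calc Kp n s * Cm s c ^ (m+1)
          + laurentShift n 0 (s+1) c * (G * Cm s c + sh n ((m : ℕ) : ZMod n) * Fm n s)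
        = (Kp n s * Cm s c ^ m + laurentShift n 0 (s+1) c * G) * Cm s c
            + (laurentShift n 0 (s+1) c * sh n ((m : ℕ) : ZMod n)) * Fm n s := by
          simp only [pow_succ, Matrix.mul_add, Matrix.add_mul, Matrix.mul_assoc]
          abel
      _ = (sh n ((m : ℕ) : ZMod n) * Kp n s) * Cm s c
            + (sh n ((m : ℕ) : ZMod n) * laurentShift n 0 (s+1) c) * Fm n s := by
          rw [hG, sh_comm]
      _ = sh n ((m : ℕ) : ZMod n) * (sh n 1 * Kp n s) := by
          rw [hsh1]
          simp only [Matrix.mul_add, Matrix.mul_assoc]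
      _ = sh n (((m+1:ℕ)) : ZMod n) * Kp n s := by
          rw [hcast, ← sh_mul_sh, Matrix.mul_assoc]

lemma Kp_mul_pow_sub_one (hcs : c (s+1) = 1) :
    ∃ G : Matrix (ZMod n) (Fin (s+1)) ℤ,
      Kp n s * (Cm s c ^ n - 1) = laurentShift n 0 (s+1) c * G := by
  obtain ⟨G, hG⟩ := inter_pow n s c hcs n
  rw [ZMod.natCast_self, sh_zero, Matrix.one_mul] at hG
  refine ⟨-G, ?_⟩
  rw [Matrix.mul_sub, Matrix.mul_one, Matrix.mul_neg, eq_sub_of_add_eq hG]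
  abel

end Inter

section Rev
variable (n : ℕ) [NeZero n] (s : ℕ) (c : ℕ → ℤ)

/-- `Kv` columns: column `a` is the coordinate vector of `z^(-a)`. -/
def Kv : Matrix (Fin (s+1)) (ZMod n) ℤ :=
  Matrix.of fun k a => uvec s c ((-a).val) k

lemma uvec_add (r t : ℕ) : uvec s c (r + t) = Cm s c ^ r *ᵥ uvec s c t := by
  rw [uvec, uvec, pow_add, Matrix.mulVec_mulVec]

lemma uvec_period (r k : ℕ) :
    uvec s c (r + k*n) - uvec s c r
      ∈ LinearMap.range (Cm s c ^ n - 1).mulVecLin := by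
  induction k with
  | zero => simp
  | succ k ih =>
    have h1 : uvec s c (r + (k+1)*n) - uvec s c (r + k*n)
        ∈ LinearMap.range (Cm s c ^ n - 1).mulVecLin := by
      refine ⟨uvec s c (r + k*n), ?_⟩
      rw [Matrix.mulVecLin_apply, Matrix.sub_mulVec, Matrix.one_mulVec, ← uvec_add,
        show n + (r + k*n) = r + (k+1)*n from by ring]
    have := Submodule.add_mem _ h1 ih
    simpa using this

lemma uvec_congr {a b : ℕ} (h : ((a:ℕ) : ZMod n) = ((b:ℕ) : ZMod n)) :
    uvec s c a - uvec s c b ∈ LinearMap.range (Cm s c ^ n - 1).mulVecLin := by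
  have h' : a % n = b % n := (ZMod.natCast_eq_natCast_iff' a b n).mp h
  rcases le_total b a with hba | hab
  · obtain ⟨k, hk⟩ : ∃ k, a = b + k * n := by
      have hdvd : n ∣ a - b := (Nat.modEq_iff_dvd' hba).mp (Nat.ModEq.symm h')
      have h2 := Nat.div_mul_cancel hdvd
      exact ⟨(a - b) / n, by omega⟩
    rw [hk]
    exact uvec_period n s c b k
  · obtain ⟨k, hk⟩ : ∃ k, b = a + k * n := by
      have hdvd : n ∣ b - a := (Nat.modEq_iff_dvd' hab).mp h'
      have h2 := Nat.div_mul_cancel hdvd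
      exact ⟨(b - a) / n, by omega⟩
    have h2 := neg_mem (uvec_period n s c a k)
    rw [neg_sub, ← hk] at h2
    exact h2

lemma val_cast_eq (x : ZMod n) : ((x.val : ℕ) : ZMod n) = x := ZMod.natCast_rightInverse x

lemma Kv_mulVec_col (hcs : c (s+1) = 1) (j : ZMod n) :
    Kv n s c *ᵥ (fun i => laurentShift n 0 (s+1) c i j)
      ∈ LinearMap.range (Cm s c ^ n - 1).mulVecLin := by
  set r := (-j).val with hr
  have hsum : Kv n s c *ᵥ (fun i => laurentShift n 0 (s+1) c i j)
      = ∑ t ∈ Finset.range (s+2), c t • uvec s c (((t : ZMod n) - j).val) := by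
    funext k
    rw [Matrix.mulVec, dotProduct]
    simp only [Kv, of_apply, M0_apply, Finset.mul_sum]
    rw [Finset.sum_comm]
    conv_rhs => rw [Finset.sum_apply]
    refine Finset.sum_congr rfl fun t _ => ?_
    rw [Finset.sum_eq_single (j - ((t:ℕ) : ZMod n))]
    · rw [if_pos (by ring), neg_sub, Pi.smul_apply, smul_eq_mul]
      ring
    · intro a _ ha
      rw [if_neg fun h => ha (by rw [h]; ring), mul_zero, mul_zero]
    · simp
  have h0 : ∑ t ∈ Finset.range (s+2), c t • uvec s c (r + t) = 0 := by
    calc ∑ t ∈ Finset.range (s+2), c t • uvec s c (r + t)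
        = (Cm s c ^ r).mulVecLin (∑ t ∈ Finset.range (s+2), c t • uvec s c t) := by
          rw [map_sum]
          refine Finset.sum_congr rfl fun t _ => ?_
          rw [_root_.map_smul, Matrix.mulVecLin_apply, ← uvec_add]
      _ = 0 := by rw [Q_uvec s c hcs, map_zero]
  have hsplit : ∑ t ∈ Finset.range (s+2), c t • uvec s c (((t : ZMod n) - j).val)
      = ∑ t ∈ Finset.range (s+2),
          c t • (uvec s c (((t : ZMod n) - j).val) - uvec s c (r + t)) := by
    have hd : ∑ t ∈ Finset.range (s+2),
          c t • (uvec s c (((t : ZMod n) - j).val) - uvec s c (r + t))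
        = ∑ t ∈ Finset.range (s+2), c t • uvec s c (((t : ZMod n) - j).val)
          - ∑ t ∈ Finset.range (s+2), c t • uvec s c (r + t) := by
      simp [smul_sub, Finset.sum_sub_distrib]
    rw [hd, h0, sub_zero]
  rw [hsum, hsplit]
  refine Submodule.sum_mem _ fun t _ => Submodule.smul_mem _ _ (uvec_congr n s c ?_)
  rw [val_cast_eq, Nat.cast_add, hr, val_cast_eq]
  ring

end Rev

section Main
variable (n : ℕ) [NeZero n] (s : ℕ) (c : ℕ → ℤ)

noncomputable def phib (hcs : c (s+1) = 1) :
    ((Fin (s+1) → ℤ) ⧸ LinearMap.range (Cm s c ^ n - 1).mulVecLin)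
      →ₗ[ℤ] ((ZMod n → ℤ) ⧸ LinearMap.range (laurentShift n 0 (s+1) c).mulVecLin) :=
  Submodule.liftQ _
    ((LinearMap.range (laurentShift n 0 (s+1) c).mulVecLin).mkQ ∘ₗ (Kp n s).mulVecLin)
    (by
      rintro _ ⟨y, rfl⟩
      obtain ⟨G, hG⟩ := Kp_mul_pow_sub_one n s c hcs
      simp only [LinearMap.mem_ker, LinearMap.comp_apply, Matrix.mulVecLin_apply,
        Matrix.mulVec_mulVec, hG, Submodule.mkQ_apply, Submodule.Quotient.mk_eq_zero]
      exact ⟨G *ᵥ y, by rw [Matrix.mulVecLin_apply, Matrix.mulVec_mulVec]⟩)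

noncomputable def psib (hcs : c (s+1) = 1) :
    ((ZMod n → ℤ) ⧸ LinearMap.range (laurentShift n 0 (s+1) c).mulVecLin)
      →ₗ[ℤ] ((Fin (s+1) → ℤ) ⧸ LinearMap.range (Cm s c ^ n - 1).mulVecLin) :=
  Submodule.liftQ _
    ((LinearMap.range (Cm s c ^ n - 1).mulVecLin).mkQ ∘ₗ (Kv n s c).mulVecLin)
    (by
      have hle : LinearMap.range ((Kv n s c * laurentShift n 0 (s+1) c).mulVecLin)
          ≤ LinearMap.range (Cm s c ^ n - 1).mulVecLin := by
        rw [Matrix.range_mulVecLin]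
        refine Submodule.span_le.mpr ?_
        rintro _ ⟨j, rfl⟩
        have hcol : (Kv n s c * laurentShift n 0 (s+1) c)ᵀ j
            = Kv n s c *ᵥ (fun i => laurentShift n 0 (s+1) c i j) := by
          funext k
          simp [Matrix.mul_apply, Matrix.mulVec, dotProduct]
        rw [show (Kv n s c * laurentShift n 0 (s+1) c).col j = _ from hcol]
        exact Kv_mulVec_col n s c hcs j
      rintro _ ⟨y, rfl⟩
      simp only [LinearMap.mem_ker, LinearMap.comp_apply, Matrix.mulVecLin_apply,
        Matrix.mulVec_mulVec, Submodule.mkQ_apply, Submodule.Quotient.mk_eq_zero]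
      exact hle ⟨y, rfl⟩)

lemma Kp_mulVec_e0 : Kp n s *ᵥ Pi.single (0 : Fin (s+1)) 1 = Pi.single (0 : ZMod n) 1 := by
  funext a
  rw [Matrix.mulVec_single_one]
  simp [Kp, Pi.single_apply]

lemma comp_phib_psib (hcs : c (s+1) = 1) :
    (phib n s c hcs) ∘ₗ (psib n s c hcs) = LinearMap.id := by
  refine Submodule.linearMap_qext _ ?_
  refine Module.Basis.ext (Pi.basisFun ℤ (ZMod n)) fun a => ?_
  simp only [LinearMap.comp_apply, Submodule.mkQ_apply, Pi.basisFun_apply,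
    LinearMap.id_apply]
  rw [psib, Submodule.liftQ_apply, LinearMap.comp_apply]
  have h1 : (Kv n s c).mulVecLin (Pi.single a 1) = uvec s c ((-a).val) := by
    rw [Matrix.mulVecLin_apply, Matrix.mulVec_single_one]
    funext k
    simp [Kv]
  rw [h1, Submodule.mkQ_apply, phib, Submodule.liftQ_apply, LinearMap.comp_apply,
    Matrix.mulVecLin_apply]
  obtain ⟨G, hG⟩ := inter_pow n s c hcs ((-a).val)
  have hKp : Kp n s *ᵥ uvec s c ((-a).val)
      = sh n (((-a).val : ℕ) : ZMod n) *ᵥ (Kp n s *ᵥ Pi.single (0 : Fin (s+1)) 1)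
        - laurentShift n 0 (s+1) c *ᵥ (G *ᵥ Pi.single (0 : Fin (s+1)) 1) := by
    rw [uvec, Matrix.mulVec_mulVec, eq_sub_of_add_eq hG, Matrix.sub_mulVec,
      Matrix.mulVec_mulVec, Matrix.mulVec_mulVec]
  have hsh : sh n (((-a).val : ℕ) : ZMod n) *ᵥ Pi.single (0 : ZMod n) 1
      = Pi.single a (1:ℤ) := by
    funext i
    rw [sh_mulVec, val_cast_eq]
    simp [Pi.single_apply, add_neg_eq_zero]
  rw [hKp, Kp_mulVec_e0, hsh, Submodule.mkQ_apply]
  rw [Submodule.Quotient.eq]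
  have : Pi.single a (1:ℤ) - laurentShift n 0 (s+1) c *ᵥ (G *ᵥ Pi.single 0 1)
      - Pi.single a 1 = -(laurentShift n 0 (s+1) c *ᵥ (G *ᵥ Pi.single 0 1)) := by abel
  rw [this]
  exact neg_mem ⟨G *ᵥ Pi.single 0 1, by rw [Matrix.mulVecLin_apply]⟩

lemma comp_psib_phib (hcs : c (s+1) = 1) :
    (psib n s c hcs) ∘ₗ (phib n s c hcs) = LinearMap.id := by
  refine Submodule.linearMap_qext _ ?_
  refine Module.Basis.ext (Pi.basisFun ℤ (Fin (s+1))) fun k => ?_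
  simp only [LinearMap.comp_apply, Submodule.mkQ_apply, Pi.basisFun_apply,
    LinearMap.id_apply]
  rw [phib, Submodule.liftQ_apply, LinearMap.comp_apply, Matrix.mulVecLin_apply]
  have h1 : Kp n s *ᵥ Pi.single k 1 = Pi.single (-(((k:ℕ)) : ZMod n)) (1:ℤ) := by
    funext a
    rw [Matrix.mulVec_single_one]
    simp [Kp, Pi.single_apply]
  rw [h1, Submodule.mkQ_apply, psib, Submodule.liftQ_apply, LinearMap.comp_apply,
    Matrix.mulVecLin_apply]
  have h2 : Kv n s c *ᵥ Pi.single (-(((k:ℕ)) : ZMod n)) (1:ℤ)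
      = uvec s c ((((k:ℕ) : ZMod n)).val) := by
    funext k'
    rw [Matrix.mulVec_single_one]
    simp [Kv]
  rw [h2, Submodule.mkQ_apply, Submodule.Quotient.eq]
  have h3 : (Pi.single k (1:ℤ)) = uvec s c (k : ℕ) := by
    rw [uvec_lt s c _ k.isLt]
    funext i
    simp [Pi.single_apply, Fin.ext_iff]
  rw [h3]
  exact uvec_congr n s c (by rw [val_cast_eq])

end Main

section Hankel
variable (s : ℕ) (c : ℕ → ℤ)

/-- The Bezoutian/Hankel matrix `H i k = c (i+k+1)` (truncated). -/
def Hm : Matrix (Fin (s+1)) (Fin (s+1)) ℤ :=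
  Matrix.of fun i k => if (i:ℕ) + (k:ℕ) + 1 ≤ s+1 then c ((i:ℕ) + (k:ℕ) + 1) else 0

lemma Hm_symm : (Hm s c)ᵀ = Hm s c := by
  ext i k
  rw [transpose_apply, Hm, of_apply, of_apply, show (k:ℕ) + (i:ℕ) = (i:ℕ) + (k:ℕ) from add_comm _ _]

lemma CmHm_entry (hcs : c (s+1) = 1) (i k : Fin (s+1)) :
    (Cm s c * Hm s c) i k
      = (if 1 ≤ (i:ℕ) ∧ 1 ≤ (k:ℕ) ∧ (i:ℕ) + (k:ℕ) ≤ s+1 then c ((i:ℕ)+(k:ℕ)) else 0)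
        + (if (i:ℕ) = 0 ∧ (k:ℕ) = 0 then -c 0 else 0) := by
  rw [Matrix.mul_apply]
  have hsplit : ∀ m : Fin (s+1), Cm s c i m * Hm s c m k
      = (if (m:ℕ) = s then -c (i:ℕ) * Hm s c m k else 0)
        + (if (i:ℕ) = (m:ℕ)+1 ∧ (m:ℕ) ≠ s then Hm s c m k else 0) := by
    intro m
    rw [Cm_apply]
    by_cases h1 : (m:ℕ) = s
    · simp [h1]
    · simp only [h1, if_false, ite_mul, one_mul, zero_mul, ne_eq, not_false_eq_true,
        and_true, zero_add]
  rw [Finset.sum_congr rfl fun m _ => hsplit m, Finset.sum_add_distrib]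
  have hlast : ∑ m : Fin (s+1), (if (m:ℕ) = s then -c (i:ℕ) * Hm s c m k else 0)
      = -c (i:ℕ) * Hm s c (Fin.last s) k := by
    rw [Finset.sum_eq_single (Fin.last s)]
    · simp [Fin.last]
    · intro m _ hm
      exact if_neg fun h => hm (Fin.ext (by simpa using h))
    · simp
  rw [hlast]
  have hHlast : Hm s c (Fin.last s) k = if (k:ℕ) = 0 then 1 else 0 := by
    rw [Hm, of_apply]
    rcases Nat.eq_zero_or_pos (k:ℕ) with hk | hk
    · rw [hk, if_pos (by simp [Fin.val_last])]
      simpa [Fin.val_last] using hcs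
    · rw [if_neg (by simp only [Fin.val_last]; omega), if_neg (by omega)]
  rw [hHlast]
  rcases Nat.eq_zero_or_pos (i:ℕ) with hi | hi
  · -- i = 0 : second sum vanishes
    have h2 : ∑ m : Fin (s+1), (if (i:ℕ) = (m:ℕ)+1 ∧ (m:ℕ) ≠ s then Hm s c m k else 0) = 0 := by
      refine Finset.sum_eq_zero fun m _ => if_neg ?_
      rintro ⟨h, -⟩
      omega
    rw [h2, hi]
    by_cases hk : (k:ℕ) = 0
    · rw [if_pos hk, if_neg (by omega : ¬(1 ≤ (0:ℕ) ∧ 1 ≤ (k:ℕ) ∧ (0:ℕ)+(k:ℕ) ≤ s+1)),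
        if_pos (⟨rfl, hk⟩ : (0:ℕ) = 0 ∧ (k:ℕ) = 0)]
      ring
    · have hr2 : ¬((0:ℕ) = 0 ∧ (k:ℕ) = 0) := fun h => hk h.2
      rw [if_neg hk, if_neg (by omega : ¬(1 ≤ (0:ℕ) ∧ 1 ≤ (k:ℕ) ∧ (0:ℕ) + (k:ℕ) ≤ s+1)), if_neg hr2]
      ring
  · -- i ≥ 1 : second sum collapses at m = i - 1
    have him : (i:ℕ) - 1 < s + 1 := by omega
    have hilt := i.isLt
    have h2 : ∑ m : Fin (s+1), (if (i:ℕ) = (m:ℕ)+1 ∧ (m:ℕ) ≠ s then Hm s c m k else 0)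
        = Hm s c ⟨(i:ℕ)-1, him⟩ k := by
      rw [Finset.sum_eq_single (⟨(i:ℕ)-1, him⟩ : Fin (s+1))]
      · rw [if_pos ⟨by simp only [Fin.val_mk]; omega, by simp only [Fin.val_mk]; omega⟩]
      · intro m _ hm
        refine if_neg ?_
        rintro ⟨h, -⟩
        exact hm (Fin.ext (by simp only [Fin.val_mk]; omega))
      · simp
    rw [h2, Hm, of_apply]
    have harith : (i:ℕ) - 1 + (k:ℕ) + 1 = (i:ℕ) + (k:ℕ) := by omega
    simp only [Fin.val_mk]
    rw [harith]
    have hilt2 : (i:ℕ) ≤ s := by omega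
    by_cases hk : (k:ℕ) = 0
    · rw [if_pos hk, if_pos (by omega : (i:ℕ) + (k:ℕ) ≤ s+1),
        if_neg (by omega : ¬(1 ≤ (i:ℕ) ∧ 1 ≤ (k:ℕ) ∧ (i:ℕ)+(k:ℕ) ≤ s+1)),
        if_neg (by omega : ¬((i:ℕ) = 0 ∧ (k:ℕ) = 0)), hk, add_zero]
      ring
    · have hr2 : ¬((i:ℕ) = 0 ∧ (k:ℕ) = 0) := fun h => hk h.2
      rw [if_neg hk, if_neg hr2]
      by_cases hik : (i:ℕ) + (k:ℕ) ≤ s + 1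
      · rw [if_pos hik, if_pos (⟨hi, by omega, hik⟩ : 1 ≤ (i:ℕ) ∧ 1 ≤ (k:ℕ) ∧ (i:ℕ)+(k:ℕ) ≤ s+1)]
        ring
      · have hr1 : ¬(1 ≤ (i:ℕ) ∧ 1 ≤ (k:ℕ) ∧ (i:ℕ)+(k:ℕ) ≤ s+1) := fun h => hik h.2.2
        rw [if_neg hik, if_neg hr1]
        ring


lemma Cm_mul_Hm (hcs : c (s+1) = 1) :
    Cm s c * Hm s c = Hm s c * compMat (s+1) c := by
  have hsym : (Cm s c * Hm s c)ᵀ = Cm s c * Hm s c := by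
    ext i k
    rw [transpose_apply, CmHm_entry s c hcs k i, CmHm_entry s c hcs i k]
    congr 1
    · refine if_congr ?_ (by rw [add_comm]) rfl
      constructor <;> rintro ⟨a, b, h⟩ <;> exact ⟨b, a, by omega⟩
    · exact if_congr and_comm rfl rfl
  calc Cm s c * Hm s c = (Cm s c * Hm s c)ᵀ := hsym.symm
    _ = (Hm s c)ᵀ * (Cm s c)ᵀ := transpose_mul _ _
    _ = Hm s c * compMat (s+1) c := by rw [Hm_symm, Cm, transpose_transpose]

lemma pow_mul_Hm (hcs : c (s+1) = 1) (m : ℕ) :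
    Cm s c ^ m * Hm s c = Hm s c * compMat (s+1) c ^ m := by
  induction m with
  | zero => rw [pow_zero, pow_zero, Matrix.one_mul, Matrix.mul_one]
  | succ m ih =>
    rw [pow_succ, pow_succ, Matrix.mul_assoc, Cm_mul_Hm s c hcs, ← Matrix.mul_assoc, ih,
      Matrix.mul_assoc]

lemma sub_one_mul_Hm (n : ℕ) (hcs : c (s+1) = 1) :
    (Cm s c ^ n - 1) * Hm s c = Hm s c * (compMat (s+1) c ^ n - 1) := by
  rw [Matrix.sub_mul, Matrix.mul_sub, pow_mul_Hm s c hcs, Matrix.one_mul, Matrix.mul_one]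

lemma Hm_det_isUnit (hcs : c (s+1) = 1) : IsUnit (Hm s c).det := by
  set L := (Hm s c).submatrix (Fin.revPerm : Equiv.Perm (Fin (s+1))) id with hLdef
  have htri : L.BlockTriangular OrderDual.toDual := by
    intro i j hij
    have hij' : i < j := hij
    have hrev : ((Fin.rev i : Fin (s+1)) : ℕ) = s - (i : ℕ) := by
      rw [Fin.val_rev]; omega
    have hjlt := j.isLt
    have hilt := i.isLt
    rw [hLdef]
    show Hm s c (Fin.revPerm i) j = 0
    rw [Hm, of_apply, if_neg ?_]
    show ¬((Fin.revPerm i : Fin (s+1)) : ℕ) + (j : ℕ) + 1 ≤ s + 1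
    have : ((Fin.revPerm i : Fin (s+1)) : ℕ) = s - (i : ℕ) := hrev
    rw [this]
    have : (i : ℕ) < (j : ℕ) := hij'
    omega
  have hdiag : ∀ i, L i i = 1 := by
    intro i
    rw [hLdef]
    show Hm s c (Fin.revPerm i) i = 1
    have hrev : ((Fin.revPerm i : Fin (s+1)) : ℕ) = s - (i : ℕ) := by
      show ((Fin.rev i : Fin (s+1)) : ℕ) = s - (i : ℕ)
      rw [Fin.val_rev]; omega
    have hilt := i.isLt
    rw [Hm, of_apply, hrev, if_pos (by omega),
      show s - (i:ℕ) + (i:ℕ) + 1 = s + 1 from by omega, hcs]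
  have hL : L.det = 1 := by
    rw [Matrix.det_of_lowerTriangular L htri]
    exact Finset.prod_eq_one fun i _ => hdiag i
  have hperm := Matrix.det_permute (Fin.revPerm : Equiv.Perm (Fin (s+1))) (Hm s c)
  rw [← hLdef, hL] at hperm
  exact IsUnit.of_mul_eq_one _ (by rw [mul_comm]; exact hperm.symm)

end Hankel

section Glue

lemma toLin'_eq {α β : Type*} [Fintype α] [Fintype β] [DecidableEq β] (M : Matrix α β ℤ) :
    Matrix.toLin' M = M.mulVecLin :=
  LinearMap.ext fun v => by rw [Matrix.toLin'_apply, Matrix.mulVecLin_apply]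

lemma range_mulVecLin_top {α : Type*} [Fintype α] [DecidableEq α] (U : Matrix α α ℤ)
    [Invertible U] : LinearMap.range U.mulVecLin = ⊤ :=
  LinearMap.range_eq_top.mpr fun v => ⟨⅟U *ᵥ v, by
    rw [Matrix.mulVecLin_apply, Matrix.mulVec_mulVec, mul_invOf_self, Matrix.one_mulVec]⟩

lemma range_mul_inv {α β : Type*} [Fintype α] [Fintype β] [DecidableEq α]
    (X : Matrix β α ℤ) (U : Matrix α α ℤ) [Invertible U] :
    LinearMap.range (X * U).mulVecLin = LinearMap.range X.mulVecLin := by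
  rw [Matrix.mulVecLin_mul]
  exact LinearMap.range_comp_of_range_eq_top _ (range_mulVecLin_top U)

noncomputable def quotEquivOfConj {α : Type*} [Fintype α] [DecidableEq α]
    (X Y U : Matrix α α ℤ) [Invertible U] (h : X * U = U * Y) :
    ((α → ℤ) ⧸ LinearMap.range Y.mulVecLin) ≃ₗ[ℤ] ((α → ℤ) ⧸ LinearMap.range X.mulVecLin) :=
  Submodule.Quotient.equiv _ _
    (LinearEquiv.ofLinear U.mulVecLin (⅟U).mulVecLin
      (by rw [← Matrix.mulVecLin_mul, mul_invOf_self, Matrix.mulVecLin_one])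
      (by rw [← Matrix.mulVecLin_mul, invOf_mul_self, Matrix.mulVecLin_one]))
    (by
      show Submodule.map U.mulVecLin (LinearMap.range Y.mulVecLin)
        = LinearMap.range X.mulVecLin
      calc Submodule.map U.mulVecLin (LinearMap.range Y.mulVecLin)
          = LinearMap.range (U.mulVecLin ∘ₗ Y.mulVecLin) := (LinearMap.range_comp _ _).symm
        _ = LinearMap.range ((U * Y).mulVecLin) := by rw [Matrix.mulVecLin_mul]
        _ = LinearMap.range ((X * U).mulVecLin) := by rw [h]
        _ = LinearMap.range (X.mulVecLin ∘ₗ U.mulVecLin) := by rw [Matrix.mulVecLin_mul]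
        _ = LinearMap.range X.mulVecLin :=
            LinearMap.range_comp_of_range_eq_top _ (range_mulVecLin_top U))

end Glue

end LCK

set_option maxHeartbeats 1000000 in
theorem coker_laurentShift_iso_coker_compMat_pow_sub_one
    (n : ℕ) [NeZero n] (p : ℤ) (s : ℕ) (hs : 0 < s) (c : ℕ → ℤ)
    (hc0 : c 0 = 1) (hcs : c s = 1) :
    Nonempty (coker (laurentShift n p s c) ≃+ coker (compMat s c ^ n - 1)) := by
  obtain ⟨s', rfl⟩ : ∃ s', s = s' + 1 := ⟨s - 1, by omega⟩
  constructor
  haveI : Invertible (LCK.Hm s' c) :=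
    (LCK.Hm s' c).invertibleOfIsUnitDet (LCK.Hm_det_isUnit s' c hcs)
  have h1 : LinearMap.range (Matrix.toLin' (laurentShift n p (s'+1) c))
      = LinearMap.range (laurentShift n p (s'+1) c).mulVecLin := by rw [LCK.toLin'_eq]
  have h2 : LinearMap.range (laurentShift n p (s'+1) c).mulVecLin
      = LinearMap.range (laurentShift n 0 (s'+1) c).mulVecLin := by
    rw [LCK.laurent_factor, LCK.range_mul_inv]
  have h5 : LinearMap.range ((compMat (s'+1) c ^ n - 1).mulVecLin)
      = LinearMap.range (Matrix.toLin' (compMat (s'+1) c ^ n - 1)) := by rw [LCK.toLin'_eq]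
  have e1 : coker (laurentShift n p (s'+1) c)
      ≃ₗ[ℤ] ((ZMod n → ℤ) ⧸ LinearMap.range (laurentShift n 0 (s'+1) c).mulVecLin) :=
    Submodule.quotEquivOfEq _ _ (h1.trans h2)
  have e2 : ((ZMod n → ℤ) ⧸ LinearMap.range (laurentShift n 0 (s'+1) c).mulVecLin)
      ≃ₗ[ℤ] ((Fin (s'+1) → ℤ) ⧸ LinearMap.range (LCK.Cm s' c ^ n - 1).mulVecLin) :=
    LinearEquiv.ofLinear (LCK.psib n s' c hcs) (LCK.phib n s' c hcs)
      (LCK.comp_psib_phib n s' c hcs) (LCK.comp_phib_psib n s' c hcs)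
  have e3 : ((Fin (s'+1) → ℤ) ⧸ LinearMap.range (LCK.Cm s' c ^ n - 1).mulVecLin)
      ≃ₗ[ℤ] ((Fin (s'+1) → ℤ) ⧸ LinearMap.range ((compMat (s'+1) c ^ n - 1)).mulVecLin) :=
    (LCK.quotEquivOfConj (LCK.Cm s' c ^ n - 1) (compMat (s'+1) c ^ n - 1) (LCK.Hm s' c)
      (LCK.sub_one_mul_Hm s' c n hcs)).symm
  have e4 : ((Fin (s'+1) → ℤ) ⧸ LinearMap.range ((compMat (s'+1) c ^ n - 1)).mulVecLin)
      ≃ₗ[ℤ] coker (compMat (s'+1) c ^ n - 1) :=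
    Submodule.quotEquivOfEq _ _ h5
  exact (e1.trans (e2.trans (e3.trans e4))).toAddEquiv
end
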